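/- Let D : [0,∞) → ℝ be a bounded continuous function. For a real number λ, the following are equivalent: (i) λ < β⁻(D), where β⁻(D) is the lower Bohl exponent of D; (ii) the shifted equation x' = (D(t) − λ)·x admits an exponential dichotomy of unstable type on [0,∞), i.e., there exist constants L ≥ 1 and η > 0 such that exp(∫_s^t (D(τ) − λ) dτ) ≥ L⁻¹·exp(η·(t − s)) for all t ≥ s ≥ 0. -/

import Mathlib

open Filter Set

/-- Transition operator of the scalar linear equation `x' = D t * x`. -/
noncomputable def Phi (D : ℝ → ℝ) (t s : ℝ) : ℝ :=
  Real.exp (∫ τ in s..t, D τ)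

/-- Average of `D` over the interval from `q.1` to `q.2`. -/
noncomputable def bohlAvg (D : ℝ → ℝ) (q : ℝ × ℝ) : ℝ :=
  (q.2 - q.1)⁻¹ * ∫ τ in q.1..q.2, D τ

/-- The filter describing `t - s → +∞` with `t > s ≥ 0` for pairs `q = (s, t)`. -/
def bohlFilter : Filter (ℝ × ℝ) :=
  (Filter.atTop.comap fun q : ℝ × ℝ => q.2 - q.1) ⊓
    Filter.principal {q : ℝ × ℝ | 0 ≤ q.1 ∧ q.1 < q.2}

/-- Upper Bohl exponent of `D`. -/
noncomputable def bohlUpper (D : ℝ → ℝ) : ℝ :=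
  Filter.limsup (bohlAvg D) bohlFilter

/-- Lower Bohl exponent of `D`. -/
noncomputable def bohlLower (D : ℝ → ℝ) : ℝ :=
  Filter.liminf (bohlAvg D) bohlFilter

lemma bohl_tendsto : Filter.Tendsto (fun u : ℝ => ((0:ℝ), u)) Filter.atTop bohlFilter := by
  unfold bohlFilter
  refine Filter.tendsto_inf.2 ⟨?_, ?_⟩
  · rw [Filter.tendsto_comap_iff]
    have : ((fun q : ℝ × ℝ => q.2 - q.1) ∘ fun u : ℝ => ((0:ℝ), u)) = fun u : ℝ => u - 0 := rfl
    rw [this]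
    simp only [sub_zero]
    exact Filter.tendsto_id
  · rw [Filter.tendsto_principal]
    filter_upwards [Filter.eventually_gt_atTop 0] with u hu
    exact ⟨le_refl 0, hu⟩

instance bohlFilter_neBot : bohlFilter.NeBot := Filter.neBot_of_le bohl_tendsto

lemma eventually_bohl {P : ℝ × ℝ → Prop} :
    (∀ᶠ q in bohlFilter, P q) ↔ ∃ T : ℝ, ∀ s t : ℝ, 0 ≤ s → s < t → T ≤ t - s → P (s, t) := by
  rw [bohlFilter, Filter.eventually_inf_principal, Filter.eventually_comap]
  constructor
  · intro h
    obtain ⟨T, hT⟩ := Filter.eventually_atTop.1 h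
    exact ⟨T, fun s t hs hst hT' => hT (t - s) hT' (s, t) rfl ⟨hs, hst⟩⟩
  · rintro ⟨T, hT⟩
    refine Filter.eventually_atTop.2 ⟨T, fun y hy q hq hqS => ?_⟩
    have := hT q.1 q.2 hqS.1 hqS.2 (hq ▸ hy)
    simpa using this

theorem spectral_gap_unstable_characterization (D : ℝ → ℝ)
    (hD_cont : ContinuousOn D (Set.Ici 0)) (hD_bdd : ∃ M, ∀ t, 0 ≤ t → |D t| ≤ M)
    (lam : ℝ) :
    lam < bohlLower D ↔
      ∃ L η : ℝ, 1 ≤ L ∧ 0 < η ∧ ∀ s t, 0 ≤ s → s ≤ t →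
        L⁻¹ * Real.exp (η * (t - s)) ≤ Real.exp (∫ τ in s..t, (D τ - lam)) := by
  obtain ⟨M₀, hM₀⟩ := hD_bdd
  set M := max M₀ 0 with hM
  have hMnn : 0 ≤ M := le_max_right _ _
  have hMb : ∀ t, 0 ≤ t → |D t| ≤ M := fun t ht => (hM₀ t ht).trans (le_max_left _ _)
  have hInt : ∀ s t : ℝ, 0 ≤ s → s ≤ t → IntervalIntegrable D MeasureTheory.volume s t := by
    intro s t hs hst
    apply ContinuousOn.intervalIntegrable
    apply hD_cont.mono
    rw [Set.uIcc_of_le hst]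
    exact fun x hx => hs.trans hx.1
  have hIntBound : ∀ s t : ℝ, 0 ≤ s → s ≤ t → |∫ τ in s..t, D τ| ≤ M * (t - s) := by
    intro s t hs hst
    have h := intervalIntegral.norm_integral_le_of_norm_le_const (C := M) (f := D) (a := s)
      (b := t) ?_
    · rwa [Real.norm_eq_abs, abs_of_nonneg (by linarith : (0:ℝ) ≤ t - s)] at h
    · intro x hx
      rw [Set.uIoc_of_le hst] at hx
      exact hMb x (le_trans hs hx.1.le)
  have hsub : ∀ s t : ℝ, 0 ≤ s → s ≤ t →
      (∫ τ in s..t, (D τ - lam)) = (∫ τ in s..t, D τ) - lam * (t - s) := by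
    intro s t hs hst
    rw [intervalIntegral.integral_sub (hInt s t hs hst) intervalIntegrable_const,
      intervalIntegral.integral_const, smul_eq_mul, mul_comm]
  have havg : ∀ s t : ℝ, bohlAvg D (s, t) = (t - s)⁻¹ * ∫ τ in s..t, D τ := fun _ _ => rfl
  constructor
  · intro hlam
    set η := (bohlLower D - lam) / 2 with hη
    have hηpos : 0 < η := by rw [hη]; linarith
    have hmid : lam + η < bohlLower D := by rw [hη]; linarith
    have hbdd : Filter.IsBoundedUnder (· ≥ ·) bohlFilter (bohlAvg D) := by
      refine ⟨-M, ?_⟩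
      rw [Filter.eventually_map, eventually_bohl]
      refine ⟨0, fun s t hs hst _ => ?_⟩
      rw [havg]
      have h1 : 0 < t - s := by linarith
      have h2 := (abs_le.1 (hIntBound s t hs hst.le)).1
      have h3 : (t - s)⁻¹ * (-(M * (t - s))) ≤ (t - s)⁻¹ * ∫ τ in s..t, D τ :=
        mul_le_mul_of_nonneg_left h2 (by positivity)
      have h4 : (t - s)⁻¹ * (-(M * (t - s))) = -M := by field_simp
      rw [h4] at h3
      exact h3
    have hev := Filter.eventually_lt_of_lt_liminf hmid hbdd
    rw [eventually_bohl] at hev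
    obtain ⟨T₀, hT⟩ := hev
    set T := max T₀ 1 with hTdef
    have hT1 : (1:ℝ) ≤ T := le_max_right _ _
    set L := Real.exp ((η + M + |lam|) * T) with hL
    have hLpos : 0 < L := Real.exp_pos _
    have hlogL : Real.log L = (η + M + |lam|) * T := Real.log_exp _
    have hcnn : 0 ≤ (η + M + |lam|) * T := by
      have := abs_nonneg lam
      nlinarith
    have hL1 : 1 ≤ L := by
      rw [hL, Real.one_le_exp_iff]
      exact hcnn
    refine ⟨L, η, hL1, hηpos, fun s t hs hst => ?_⟩
    have key : -Real.log L + η * (t - s) ≤ ∫ τ in s..t, (D τ - lam) := by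
      rw [hsub s t hs hst, hlogL]
      rcases le_or_gt T (t - s) with hcase | hcase
      · have hst' : s < t := by linarith
        have hAvg := hT s t hs hst' (le_trans (le_max_left _ _) hcase)
        rw [havg] at hAvg
        have h1 : 0 < t - s := by linarith
        have h2 : (lam + η) * (t - s) < ∫ τ in s..t, D τ := by
          have hh := mul_lt_mul_of_pos_left hAvg h1
          rw [← mul_assoc, mul_inv_cancel₀ (ne_of_gt h1), one_mul] at hh
          rw [mul_comm]
          exact hh
        nlinarith [abs_nonneg lam]
      · have h2 := (abs_le.1 (hIntBound s t hs hst)).1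
        have h3 : lam * (t - s) ≤ |lam| * (t - s) :=
          mul_le_mul_of_nonneg_right (le_abs_self lam) (by linarith)
        nlinarith [mul_nonneg (by positivity : (0:ℝ) ≤ η + M + |lam|)
          (by linarith : (0:ℝ) ≤ T - (t - s))]
    calc L⁻¹ * Real.exp (η * (t - s)) = Real.exp (-Real.log L + η * (t - s)) := by
          rw [Real.exp_add, Real.exp_neg, Real.exp_log hLpos]
      _ ≤ _ := Real.exp_le_exp.2 key
  · rintro ⟨L, η, hL1, hηpos, h⟩
    have hLpos : 0 < L := lt_of_lt_of_le one_pos hL1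
    have hlogL : 0 ≤ Real.log L := Real.log_nonneg hL1
    have hcb : Filter.IsCoboundedUnder (· ≥ ·) bohlFilter (bohlAvg D) := by
      apply Filter.IsBoundedUnder.isCoboundedUnder_ge
      refine ⟨M, ?_⟩
      rw [Filter.eventually_map, eventually_bohl]
      refine ⟨0, fun s t hs hst _ => ?_⟩
      rw [havg]
      have h1 : 0 < t - s := by linarith
      have h2 := (abs_le.1 (hIntBound s t hs hst.le)).2
      have h3 : (t - s)⁻¹ * (∫ τ in s..t, D τ) ≤ (t - s)⁻¹ * (M * (t - s)) :=
        mul_le_mul_of_nonneg_left h2 (by positivity)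
      have h4 : (t - s)⁻¹ * (M * (t - s)) = M := by field_simp
      rw [h4] at h3
      exact h3
    have hev : ∀ᶠ q in bohlFilter, lam + η / 2 ≤ bohlAvg D q := by
      rw [eventually_bohl]
      refine ⟨2 * Real.log L / η + 1, fun s t hs hst hTs => ?_⟩
      have hd : 0 ≤ 2 * Real.log L / η := by positivity
      have h1 : 0 < t - s := by linarith
      have hint := h s t hs hst.le
      have hlog : -Real.log L + η * (t - s) ≤ ∫ τ in s..t, (D τ - lam) := by
        have hll := Real.log_le_log (by positivity) hint
        rwa [Real.log_exp, Real.log_mul (by positivity) (Real.exp_ne_zero _), Real.log_inv,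
          Real.log_exp] at hll
      rw [hsub s t hs hst.le] at hlog
      rw [havg]
      have h2a : 2 * Real.log L / η ≤ t - s - 1 := by linarith
      have h2b : 2 * Real.log L ≤ (t - s - 1) * η := (div_le_iff₀ hηpos).1 h2a
      have h2 : 2 * Real.log L ≤ η * (t - s) := by nlinarith
      have key : (lam + η / 2) * (t - s) ≤ ∫ τ in s..t, D τ := by linarith
      calc lam + η / 2 = ((lam + η / 2) * (t - s)) * (t - s)⁻¹ := by
            rw [mul_assoc, mul_inv_cancel₀ (ne_of_gt h1), mul_one]
        _ ≤ (∫ τ in s..t, D τ) * (t - s)⁻¹ :=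
            mul_le_mul_of_nonneg_right key (by positivity)
        _ = (t - s)⁻¹ * ∫ τ in s..t, D τ := mul_comm _ _
    have hle : lam + η / 2 ≤ bohlLower D := Filter.le_liminf_of_le hcb hev
    linarith
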